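/- Let Γ ⊂ ℝⁿ be a compact d-set with 0 < d ≤ n and d-set constants c₁, c₂, let D > 0 satisfy diam(Γ) ≤ D, and let f : (0,∞) → [0,∞] be nonincreasing. Then there exists C > 0, depending only on c₂, d and D, such that for every x ∈ Γ, ∫_Γ f(|x − y|) dH^d(y) ≤ C ∫_0^D r^{d−1} f(r) dr. -/

import Mathlib

open MeasureTheory
open scoped ENNReal NNReal

/-- `Γ` is a `d`-set (Ahlfors–David `d`-regular) with regularity constants `c₁ ≤ c₂`:
`c₁ r^d ≤ H^d(Γ ∩ B(x,r)) ≤ c₂ r^d` for all `x ∈ Γ` and `0 < r ≤ 1`. -/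
def IsDSet {n : ℕ} (Γ : Set (EuclideanSpace ℝ (Fin n))) (d c₁ c₂ : ℝ) : Prop :=
  ∀ x ∈ Γ, ∀ r : ℝ, 0 < r → r ≤ 1 →
    ENNReal.ofReal (c₁ * r ^ d) ≤ μH[d] (Γ ∩ Metric.closedBall x r) ∧
    μH[d] (Γ ∩ Metric.closedBall x r) ≤ ENNReal.ofReal (c₂ * r ^ d)

/-- Volume-packing bound: a `1`-separated finite subset of a ball of radius `D` in
`ℝⁿ` has at most `(4D+1)ⁿ` elements. -/
lemma auxA {n : ℕ} {D : ℝ} (hD : 0 < D) (x : EuclideanSpace ℝ (Fin n))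
    (t : Finset (EuclideanSpace ℝ (Fin n))) (ht : ↑t ⊆ Metric.closedBall x D)
    (hsep : (t : Set (EuclideanSpace ℝ (Fin n))).Pairwise (fun p q => 1 ≤ dist p q)) :
    (t.card : ℝ) ≤ (4 * D + 1) ^ n := by
  have hfr : Module.finrank ℝ (EuclideanSpace ℝ (Fin n)) = n := finrank_euclideanSpace_fin
  set V : ℝ≥0∞ := volume (Metric.closedBall (0 : EuclideanSpace ℝ (Fin n)) 1) with hV
  have hVpos : V ≠ 0 := (Metric.measure_closedBall_pos volume (0 : EuclideanSpace ℝ (Fin n)) one_pos).ne'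
  have hVtop : V ≠ ⊤ := measure_closedBall_lt_top.ne
  have hdisj : Set.PairwiseDisjoint (↑t) (fun p : EuclideanSpace ℝ (Fin n) => Metric.closedBall p (1/4)) := by
    intro p hp q hq hpq
    exact Metric.closedBall_disjoint_closedBall (by have := hsep hp hq hpq; linarith)
  have hsum : volume (⋃ p ∈ t, Metric.closedBall p (1/4)) =
      ∑ p ∈ t, volume (Metric.closedBall p (1/4)) :=
    measure_biUnion_finset hdisj (fun p _ => measurableSet_closedBall)
  have hsub : (⋃ p ∈ t, Metric.closedBall p (1/4)) ⊆ Metric.closedBall x (D + 1/4) := by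
    refine Set.iUnion₂_subset fun p hp => ?_
    refine Metric.closedBall_subset_closedBall' ?_
    have := ht hp
    rw [Metric.mem_closedBall] at this
    linarith
  have hball : ∀ p : EuclideanSpace ℝ (Fin n), volume (Metric.closedBall p (1/4)) =
      ENNReal.ofReal ((1/4 : ℝ) ^ n) * V := by
    intro p
    rw [hV, MeasureTheory.Measure.addHaar_closedBall' volume p (by norm_num : (0:ℝ) ≤ 1/4), hfr]
  have hbig : volume (Metric.closedBall x (D + 1/4)) =
      ENNReal.ofReal ((D + 1/4 : ℝ) ^ n) * V := by
    rw [hV, MeasureTheory.Measure.addHaar_closedBall' volume x (by linarith : (0:ℝ) ≤ D + 1/4),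
      hfr]
  have hle : (t.card : ℝ≥0∞) * ENNReal.ofReal ((1/4 : ℝ) ^ n) * V ≤
      ENNReal.ofReal ((D + 1/4 : ℝ) ^ n) * V := by
    have h1 : ∑ p ∈ t, volume (Metric.closedBall p (1/4)) ≤
        volume (Metric.closedBall x (D + 1/4)) := by
      rw [← hsum]; exact measure_mono hsub
    have h2 : ∑ p ∈ t, volume (Metric.closedBall p (1/4)) =
        (t.card : ℝ≥0∞) * (ENNReal.ofReal ((1/4 : ℝ) ^ n) * V) := by
      rw [Finset.sum_congr rfl (fun p _ => hball p), Finset.sum_const, nsmul_eq_mul]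
    rw [h2, ← mul_assoc] at h1
    rwa [hbig] at h1
  have hle2 : (t.card : ℝ≥0∞) * ENNReal.ofReal ((1/4 : ℝ) ^ n) ≤
      ENNReal.ofReal ((D + 1/4 : ℝ) ^ n) :=
    (ENNReal.mul_le_mul_iff_left hVpos hVtop).mp hle
  have hle3 : (t.card : ℝ) * (1/4 : ℝ) ^ n ≤ (D + 1/4 : ℝ) ^ n := by
    rw [show ((t.card : ℝ≥0∞)) = ENNReal.ofReal (t.card : ℝ) by
         rw [ENNReal.ofReal_natCast],
      ← ENNReal.ofReal_mul (by positivity)] at hle2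
    exact (ENNReal.ofReal_le_ofReal_iff (by positivity)).mp hle2
  have hkey : (D + 1/4 : ℝ) ^ n = (4 * D + 1) ^ n * (1/4 : ℝ) ^ n := by
    rw [← mul_pow]
    congr 1
    ring
  rw [hkey] at hle3
  have h4 : (0:ℝ) < (1/4 : ℝ) ^ n := by positivity
  exact le_of_mul_le_mul_right hle3 h4

/-- Covering a bounded set by at most `(4D+1)ⁿ` unit balls centred in the set. -/
lemma auxB {n : ℕ} {D : ℝ} (hD : 0 < D) (x : EuclideanSpace ℝ (Fin n))
    (Γ : Set (EuclideanSpace ℝ (Fin n))) (hΓx : Γ ⊆ Metric.closedBall x D) :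
    ∃ t : Finset (EuclideanSpace ℝ (Fin n)), ↑t ⊆ Γ ∧ (t.card : ℝ) ≤ (4 * D + 1) ^ n ∧
      Γ ⊆ ⋃ p ∈ t, Metric.closedBall p 1 := by
  classical
  set P : Finset (EuclideanSpace ℝ (Fin n)) → Prop := fun t => ↑t ⊆ Γ ∧
    (t : Set (EuclideanSpace ℝ (Fin n))).Pairwise (fun p q => 1 ≤ dist p q) with hP
  set A : Set ℕ := {k | ∃ t : Finset (EuclideanSpace ℝ (Fin n)), P t ∧ t.card = k} with hA
  have hA0 : 0 ∈ A := ⟨∅, ⟨by simp, by simp⟩, rfl⟩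
  have hcardbd : ∀ t : Finset (EuclideanSpace ℝ (Fin n)), P t → (t.card : ℝ) ≤ (4 * D + 1) ^ n := fun t hPt =>
    auxA hD x t (fun p hp => hΓx (hPt.1 hp)) hPt.2
  have hbdd : BddAbove A := by
    refine ⟨⌈(4 * D + 1) ^ n⌉₊, fun k hk => ?_⟩
    obtain ⟨t, hPt, rfl⟩ := hk
    have h1 : (t.card : ℝ) ≤ (⌈(4 * D + 1) ^ n⌉₊ : ℝ) :=
      le_trans (hcardbd t hPt) (Nat.le_ceil _)
    exact_mod_cast h1
  obtain ⟨t, hPt, hcard⟩ := Nat.sSup_mem ⟨0, hA0⟩ hbdd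
  refine ⟨t, hPt.1, hcardbd t hPt, ?_⟩
  intro y hy
  by_contra hc
  rw [Set.mem_iUnion₂] at hc
  push_neg at hc
  have hfar : ∀ p ∈ t, 1 < dist y p := by
    intro p hp
    have := hc p hp
    rw [Metric.mem_closedBall] at this
    linarith [not_le.mp this]
  have hynt : y ∉ t := by
    intro hyt
    have := hfar y hyt
    rw [dist_self] at this
    linarith
  have hPt' : P (insert y t) := by
    constructor
    · rw [Finset.coe_insert]
      exact Set.insert_subset hy hPt.1
    · rw [Finset.coe_insert]
      refine (have : Std.Symm (fun p q : EuclideanSpace ℝ (Fin n) => 1 ≤ dist p q) := ⟨?_⟩; Set.pairwise_insert_of_symmetric).mpr ⟨hPt.2, fun b hb _ => (hfar b hb).le⟩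
      intro p q h
      rwa [dist_comm]
  have hmem : (insert y t).card ∈ A := ⟨insert y t, hPt', rfl⟩
  have hle := le_csSup hbdd hmem
  rw [Finset.card_insert_of_notMem hynt, hcard] at hle
  omega

/-- Uniform bound on the measure of a ball in a `d`-set, at all scales `r ≤ D`. -/
lemma auxD {n : ℕ} {d c₁ c₂ D : ℝ} (hd : 0 < d) (hc₂ : 0 < c₂) (hD : 0 < D)
    {Γ : Set (EuclideanSpace ℝ (Fin n))} (hΓ : IsCompact Γ) (hds : IsDSet Γ d c₁ c₂)
    (hdiam : Metric.diam Γ ≤ D) {x : EuclideanSpace ℝ (Fin n)} (hx : x ∈ Γ)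
    {r : ℝ} (hr : 0 < r) (hrD : r ≤ D) :
    μH[d] (Γ ∩ Metric.closedBall x r) ≤ ENNReal.ofReal ((4 * D + 1) ^ n * c₂ * r ^ d) := by
  have hone : (1:ℝ) ≤ (4 * D + 1) ^ n := one_le_pow₀ (by linarith)
  have hrd : (0:ℝ) < r ^ d := Real.rpow_pos_of_pos hr d
  rcases le_or_gt r 1 with h1 | h1
  · refine le_trans (hds x hx r hr h1).2 (ENNReal.ofReal_le_ofReal ?_)
    have h := mul_le_mul_of_nonneg_right hone (mul_pos hc₂ hrd).le
    linarith [h]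
  · -- r > 1 : bound by the total measure of Γ
    have hΓx : Γ ⊆ Metric.closedBall x D := by
      intro y hy
      rw [Metric.mem_closedBall]
      exact le_trans (Metric.dist_le_diam_of_mem hΓ.isBounded hy hx) hdiam
    obtain ⟨t, htΓ, htcard, htcov⟩ := auxB hD x Γ hΓx
    have htot : μH[d] Γ ≤ ENNReal.ofReal ((4 * D + 1) ^ n * c₂) := by
      have h0 : Γ ⊆ ⋃ p ∈ t, Γ ∩ Metric.closedBall p 1 := by
        intro y hy
        obtain ⟨p, hp, hyp⟩ := Set.mem_iUnion₂.mp (htcov hy)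
        exact Set.mem_iUnion₂.mpr ⟨p, hp, hy, hyp⟩
      calc μH[d] Γ ≤ μH[d] (⋃ p ∈ t, Γ ∩ Metric.closedBall p 1) := measure_mono h0
        _ ≤ ∑ p ∈ t, μH[d] (Γ ∩ Metric.closedBall p 1) := measure_biUnion_finset_le t _
        _ ≤ ∑ p ∈ t, ENNReal.ofReal c₂ := by
            refine Finset.sum_le_sum fun p hp => ?_
            have := (hds p (htΓ hp) 1 one_pos le_rfl).2
            rwa [Real.one_rpow, mul_one] at this
        _ = (t.card : ℝ≥0∞) * ENNReal.ofReal c₂ := by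
            rw [Finset.sum_const, nsmul_eq_mul]
        _ ≤ ENNReal.ofReal ((4 * D + 1) ^ n) * ENNReal.ofReal c₂ := by
            refine mul_le_mul_left ?_ _
            rw [show ((t.card : ℝ≥0∞)) = ENNReal.ofReal (t.card : ℝ) by
              rw [ENNReal.ofReal_natCast]]
            exact ENNReal.ofReal_le_ofReal htcard
        _ = ENNReal.ofReal ((4 * D + 1) ^ n * c₂) := by
            rw [← ENNReal.ofReal_mul (by positivity)]
    have hrd1 : (1:ℝ) ≤ r ^ d := by
      calc (1:ℝ) = 1 ^ d := (Real.one_rpow d).symm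
        _ ≤ r ^ d := Real.rpow_le_rpow zero_le_one h1.le hd.le
    calc μH[d] (Γ ∩ Metric.closedBall x r) ≤ μH[d] Γ := measure_mono Set.inter_subset_left
      _ ≤ ENNReal.ofReal ((4 * D + 1) ^ n * c₂) := htot
      _ ≤ ENNReal.ofReal ((4 * D + 1) ^ n * c₂ * r ^ d) := by
          refine ENNReal.ofReal_le_ofReal ?_
          have h := mul_le_mul_of_nonneg_left hrd1
            (by positivity : (0:ℝ) ≤ (4 * D + 1) ^ n * c₂)
          linarith [h]

/-- Layer-cake estimate over `d`-sets: there is `C > 0`, depending only on `c₂`, `d`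
and `D` (and the ambient dimension), such that for every compact `d`-set `Γ ⊂ ℝⁿ`
with `diam Γ ≤ D`, every nonincreasing `f : (0,∞) → [0,∞]`, and every `x ∈ Γ`,
`∫_Γ f(|x−y|) dH^d(y) ≤ C ∫₀^D r^{d−1} f(r) dr`. -/
theorem stmt10 (n : ℕ) (d c₂ D : ℝ) (hd : 0 < d) (hdn : d ≤ n) (hc₂ : 0 < c₂)
    (hD : 0 < D) :
    ∃ C : ℝ, 0 < C ∧
      ∀ (Γ : Set (EuclideanSpace ℝ (Fin n))) (c₁ : ℝ), 0 < c₁ → c₁ ≤ c₂ →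
        IsCompact Γ → IsDSet Γ d c₁ c₂ → Metric.diam Γ ≤ D →
        ∀ f : ℝ → ENNReal, (∀ r r' : ℝ, 0 < r → r ≤ r' → f r' ≤ f r) →
        ∀ x ∈ Γ,
          (∫⁻ y in Γ, f ‖x - y‖ ∂μH[d]) ≤
            ENNReal.ofReal C *
              ∫⁻ r in Set.Ioc (0 : ℝ) D, ENNReal.ofReal (r ^ (d - 1)) * f r := by
  classical
  set K : ℝ := (4 * D + 1) ^ n * c₂ with hK
  have hKpos : 0 < K := by positivity
  set κ : ℝ := min 1 ((2:ℝ) ^ (d - 1)) with hκdef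
  have hκpos : 0 < κ := lt_min one_pos (Real.rpow_pos_of_pos two_pos _)
  set C : ℝ := K * (4:ℝ) ^ d / κ with hC
  have hCpos : 0 < C := by
    have : (0:ℝ) < (4:ℝ) ^ d := Real.rpow_pos_of_pos (by norm_num) d
    positivity
  refine ⟨C, hCpos, ?_⟩
  intro Γ c₁ hc₁ hc₁₂ hΓ hds hdiam f hf x hx
  haveI : NoAtoms (μH[d] : Measure (EuclideanSpace ℝ (Fin n))) :=
    Measure.noAtoms_hausdorff _ hd
  -- dyadic scales
  set a : ℕ → ℝ := fun j => D * (1/2 : ℝ) ^ j with ha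
  have hapos : ∀ j, 0 < a j := fun j => by positivity
  have ha0 : a 0 = D := by simp [ha]
  have hasucc : ∀ j, a j = 2 * a (j + 1) := by
    intro j
    simp only [ha, pow_succ]
    ring
  have haanti : ∀ k m : ℕ, k ≤ m → a m ≤ a k := by
    intro k m hkm
    have : (1/2 : ℝ) ^ m ≤ (1/2) ^ k :=
      pow_le_pow_of_le_one (by norm_num) (by norm_num) hkm
    exact mul_le_mul_of_nonneg_left this hD.le
  have haD : ∀ j, a j ≤ D := fun j => ha0 ▸ haanti 0 j (Nat.zero_le j)
  -- annuli in Γ and intervals on the real line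
  set S : ℕ → Set (EuclideanSpace ℝ (Fin n)) := fun j =>
    Γ ∩ (fun y => ‖x - y‖) ⁻¹' Set.Ioc (a (j + 1)) (a j) with hS
  set I : ℕ → Set ℝ := fun j => Set.Ioc (a (j + 2)) (a (j + 1)) with hI
  have hmeasS : ∀ j, MeasurableSet (S j) := by
    intro j
    exact (hΓ.isClosed.measurableSet).inter
      (((measurable_id.const_sub x).norm) measurableSet_Ioc)
  -- the terms
  set Lt : ℕ → ℝ≥0∞ := fun j => f (a (j + 1)) * ENNReal.ofReal (K * a j ^ d) with hLt
  set Rt : ℕ → ℝ≥0∞ := fun j =>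
    ENNReal.ofReal (κ * a (j + 2) ^ (d - 1)) * f (a (j + 1)) * ENNReal.ofReal (a (j + 2))
    with hRt
  -- Step 1: LHS ≤ ∑ Lt
  have hgathered : Γ \ {x} ⊆ ⋃ j, S j := by
    intro y hy
    obtain ⟨hyΓ, hyx⟩ := hy
    have hxy : x ≠ y := fun h => hyx (by simp [h.symm])
    have ht0 : 0 < ‖x - y‖ := by
      rw [norm_pos_iff]
      exact sub_ne_zero.mpr hxy
    have htD : ‖x - y‖ ≤ D := by
      rw [← dist_eq_norm]
      exact le_trans (Metric.dist_le_diam_of_mem hΓ.isBounded hx hyΓ) hdiam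
    have hex : ∃ j : ℕ, a (j + 1) < ‖x - y‖ := by
      obtain ⟨m, hm⟩ := exists_pow_lt_of_lt_one (div_pos ht0 hD) (by norm_num : (1/2 : ℝ) < 1)
      refine ⟨m, ?_⟩
      have h1 : (1/2 : ℝ) ^ (m + 1) ≤ (1/2 : ℝ) ^ m :=
        pow_le_pow_of_le_one (by norm_num) (by norm_num) (Nat.le_succ m)
      have h2 : D * (1/2 : ℝ) ^ m < ‖x - y‖ := by
        rw [lt_div_iff₀ hD] at hm
        linarith [hm]
      calc a (m + 1) = D * (1/2 : ℝ) ^ (m + 1) := rfl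
        _ ≤ D * (1/2 : ℝ) ^ m := mul_le_mul_of_nonneg_left h1 hD.le
        _ < ‖x - y‖ := h2
    set j0 := Nat.find hex with hj0
    have h1 : a (j0 + 1) < ‖x - y‖ := Nat.find_spec hex
    have h2 : ‖x - y‖ ≤ a j0 := by
      rcases Nat.eq_zero_or_pos j0 with h | h
      · rw [h, ha0]; exact htD
      · have hlt : j0 - 1 < Nat.find hex := by rw [← hj0]; omega
        have hnot := Nat.find_min hex hlt
        have heq : j0 - 1 + 1 = j0 := by omega
        rw [← heq]
        exact not_lt.mp hnot
    exact Set.mem_iUnion.mpr ⟨j0, hyΓ, h1, h2⟩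
  have hLterm : ∀ j, (∫⁻ y in S j, f ‖x - y‖ ∂μH[d]) ≤ Lt j := by
    intro j
    calc (∫⁻ y in S j, f ‖x - y‖ ∂μH[d]) ≤ ∫⁻ _ in S j, f (a (j + 1)) ∂μH[d] := by
          refine setLIntegral_mono' (hmeasS j) fun y hy => ?_
          exact hf (a (j + 1)) ‖x - y‖ (hapos _) hy.2.1.le
      _ = f (a (j + 1)) * μH[d] (S j) := setLIntegral_const _ _
      _ ≤ f (a (j + 1)) * ENNReal.ofReal (K * a j ^ d) := by
          refine mul_le_mul_right ?_ _
          refine le_trans (measure_mono ?_) (auxD hd hc₂ hD hΓ hds hdiam hx (hapos j) (haD j))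
          intro y hy
          refine ⟨hy.1, ?_⟩
          rw [Metric.mem_closedBall, dist_comm, dist_eq_norm]
          exact hy.2.2
  have hLHS : (∫⁻ y in Γ, f ‖x - y‖ ∂μH[d]) ≤ ∑' j, Lt j := by
    have hae : (Γ \ {x} : Set (EuclideanSpace ℝ (Fin n))) =ᵐ[μH[d]] Γ :=
      diff_ae_eq_self.mpr (measure_mono_null Set.inter_subset_right (haveI := Measure.nullSingletonClass_hausdorff (EuclideanSpace ℝ (Fin n)) hd; measure_singleton x))
    calc (∫⁻ y in Γ, f ‖x - y‖ ∂μH[d]) = ∫⁻ y in Γ \ {x}, f ‖x - y‖ ∂μH[d] :=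
          (setLIntegral_congr hae).symm
      _ ≤ ∫⁻ y in ⋃ j, S j, f ‖x - y‖ ∂μH[d] := lintegral_mono_set hgathered
      _ ≤ ∑' j, ∫⁻ y in S j, f ‖x - y‖ ∂μH[d] := lintegral_iUnion_le _ _
      _ ≤ ∑' j, Lt j := ENNReal.tsum_le_tsum hLterm
  -- Step 2: ∑ Rt ≤ RHS
  have hIdisj : Pairwise (Function.onFun Disjoint I) := by
    intro i j hij
    rw [Function.onFun, hI]
    rw [Set.Ioc_disjoint_Ioc]
    rcases hij.lt_or_gt with h | h
    · calc min (a (i + 1)) (a (j + 1)) ≤ a (j + 1) := min_le_right _ _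
        _ ≤ a (i + 2) := haanti _ _ (by omega)
        _ ≤ max (a (i + 2)) (a (j + 2)) := le_max_left _ _
    · calc min (a (i + 1)) (a (j + 1)) ≤ a (i + 1) := min_le_left _ _
        _ ≤ a (j + 2) := haanti _ _ (by omega)
        _ ≤ max (a (i + 2)) (a (j + 2)) := le_max_right _ _
  have hRterm : ∀ j, Rt j ≤ ∫⁻ r in I j, ENNReal.ofReal (r ^ (d - 1)) * f r := by
    intro j
    have hconst : ∀ r ∈ I j,
        ENNReal.ofReal (κ * a (j + 2) ^ (d - 1)) * f (a (j + 1)) ≤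
          ENNReal.ofReal (r ^ (d - 1)) * f r := by
      intro r hr
      obtain ⟨hr1, hr2⟩ := hr
      have hrpos : 0 < r := lt_trans (hapos _) hr1
      refine mul_le_mul' (ENNReal.ofReal_le_ofReal ?_) (hf r (a (j + 1)) hrpos hr2)
      rcases le_or_gt 1 d with hd1 | hd1
      · have hbase : a (j + 2) ^ (d - 1) ≤ r ^ (d - 1) :=
          Real.rpow_le_rpow (hapos _).le hr1.le (by linarith)
        have hκ1 : κ ≤ 1 := min_le_left _ _
        nlinarith [Real.rpow_pos_of_pos (hapos (j + 2)) (d - 1)]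
      · have hbase : a (j + 1) ^ (d - 1) ≤ r ^ (d - 1) :=
          Real.rpow_le_rpow_of_nonpos hrpos hr2 (by linarith)
        have heq : a (j + 1) ^ (d - 1) = 2 ^ (d - 1) * a (j + 2) ^ (d - 1) := by
          have h := hasucc (j + 1)
          have he : j + 1 + 1 = j + 2 := rfl
          rw [he] at h
          rw [h, Real.mul_rpow (by norm_num) (hapos _).le]
        have hκ2 : κ ≤ 2 ^ (d - 1) := min_le_right _ _
        nlinarith [Real.rpow_pos_of_pos (hapos (j + 2)) (d - 1)]
    have h32 : a (j + 1) - a (j + 2) = a (j + 2) := by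
      have h := hasucc (j + 1)
      have he : j + 1 + 1 = j + 2 := rfl
      rw [he] at h
      linarith
    calc Rt j = (ENNReal.ofReal (κ * a (j + 2) ^ (d - 1)) * f (a (j + 1))) *
          volume (I j) := by
          rw [hRt, hI, Real.volume_Ioc, h32]
      _ = ∫⁻ _ in I j, ENNReal.ofReal (κ * a (j + 2) ^ (d - 1)) * f (a (j + 1)) :=
          (setLIntegral_const _ _).symm
      _ ≤ ∫⁻ r in I j, ENNReal.ofReal (r ^ (d - 1)) * f r :=
          setLIntegral_mono' measurableSet_Ioc hconst
  have hRHS : ∑' j, Rt j ≤ ∫⁻ r in Set.Ioc (0 : ℝ) D, ENNReal.ofReal (r ^ (d - 1)) * f r := by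
    calc ∑' j, Rt j ≤ ∑' j, ∫⁻ r in I j, ENNReal.ofReal (r ^ (d - 1)) * f r :=
          ENNReal.tsum_le_tsum hRterm
      _ = ∫⁻ r in ⋃ j, I j, ENNReal.ofReal (r ^ (d - 1)) * f r :=
          (lintegral_iUnion (fun j => measurableSet_Ioc) hIdisj _).symm
      _ ≤ ∫⁻ r in Set.Ioc (0 : ℝ) D, ENNReal.ofReal (r ^ (d - 1)) * f r := by
          refine lintegral_mono_set (Set.iUnion_subset fun j => ?_)
          exact Set.Ioc_subset_Ioc (hapos _).le (haD _)
  -- Step 3: termwise comparison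
  have hterm : ∀ j, Lt j = ENNReal.ofReal C * Rt j := by
    intro j
    have hreal : C * (κ * a (j + 2) ^ (d - 1)) * a (j + 2) = K * a j ^ d := by
      have ha4 : a j = 4 * a (j + 2) := by
        have h1 := hasucc j
        have h2 := hasucc (j + 1)
        have he : j + 1 + 1 = j + 2 := rfl
        rw [he] at h2
        linarith
      have e1 : a j ^ d = 4 ^ d * a (j + 2) ^ d := by
        rw [ha4, Real.mul_rpow (by norm_num) (hapos _).le]
      have e2 : a (j + 2) ^ d = a (j + 2) ^ (d - 1) * a (j + 2) := by
        conv_lhs => rw [show d = (d - 1) + 1 by ring]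
        rw [Real.rpow_add (hapos _), Real.rpow_one]
      have e3 : C * κ = K * 4 ^ d := div_mul_cancel₀ _ hκpos.ne'
      calc C * (κ * a (j + 2) ^ (d - 1)) * a (j + 2)
          = (C * κ) * (a (j + 2) ^ (d - 1) * a (j + 2)) := by ring
        _ = (K * 4 ^ d) * (a (j + 2) ^ d) := by rw [e3, ← e2]
        _ = K * a j ^ d := by rw [e1]; ring
    have hκa : 0 ≤ κ * a (j + 2) ^ (d - 1) := by positivity
    calc Lt j = f (a (j + 1)) * ENNReal.ofReal (K * a j ^ d) := rfl
      _ = f (a (j + 1)) * ENNReal.ofReal (C * (κ * a (j + 2) ^ (d - 1)) * a (j + 2)) := by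
          rw [hreal]
      _ = ENNReal.ofReal C * Rt j := by
          rw [hRt, ENNReal.ofReal_mul (by positivity : (0:ℝ) ≤ C * (κ * a (j + 2) ^ (d - 1))),
            ENNReal.ofReal_mul hCpos.le]
          ring
  -- Conclusion
  calc (∫⁻ y in Γ, f ‖x - y‖ ∂μH[d]) ≤ ∑' j, Lt j := hLHS
    _ = ∑' j, ENNReal.ofReal C * Rt j := tsum_congr hterm
    _ = ENNReal.ofReal C * ∑' j, Rt j := ENNReal.tsum_mul_left
    _ ≤ ENNReal.ofReal C *
        ∫⁻ r in Set.Ioc (0 : ℝ) D, ENNReal.ofReal (r ^ (d - 1)) * f r :=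
      mul_le_mul_right hRHS _
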